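/- Suppose there exists a K_4-free graph H on n vertices such that every t-clique of a (4,t)-Ramsey graph G is mapped to an independent set of H with probability at most ρ under a uniformly random map V(G) → V(H). Then every (4,t)-Ramsey graph contains at least 1/ρ copies of K_t; i.e., r_{K_t}(4,t) ≥ 1/ρ. -/

import Mathlib

open Finset

/-- A graph `G` is `(t₁,t₂)`-Ramsey: every red/blue coloring of its edges (given by a
red subgraph `R ≤ G`, with blue graph `G \ R`) contains a red `K_{t₁}` or a blue `K_{t₂}`. -/
def IsRamsey {V : Type*} (G : SimpleGraph V) (t1 t2 : ℕ) : Prop :=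
  ∀ R : SimpleGraph V, R ≤ G →
    (∃ s : Finset V, R.IsNClique t1 s) ∨ (∃ s : Finset V, (G \ R).IsNClique t2 s)

/-- The number of copies of `K_s` in `G`, i.e. the number of `s`-cliques. -/
noncomputable def cliqueCount {V : Type*} [Fintype V] (G : SimpleGraph V) (s : ℕ) : ℕ := by
  classical exact (G.cliqueFinset s).card

/-- The Ramsey number `r(t₁,t₂)`: the least `n` such that `K_n` is `(t₁,t₂)`-Ramsey. -/
noncomputable def ramseyNumber (t1 t2 : ℕ) : ℕ :=
  sInf {n | IsRamsey (⊤ : SimpleGraph (Fin n)) t1 t2}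

/-- The `K_s`-Ramsey number `r_{K_s}(t₁,t₂)`: the minimum number of copies of `K_s`
in a `(t₁,t₂)`-Ramsey graph. -/
noncomputable def ramseyCliqueNumber (s t1 t2 : ℕ) : ℕ :=
  sInf {N | ∃ (n : ℕ) (G : SimpleGraph (Fin n)), IsRamsey G t1 t2 ∧ cliqueCount G s = N}

/-- The number of independent sets of size `t` in `H`. -/
noncomputable def indepCount {V : Type*} [Fintype V] (H : SimpleGraph V) (t : ℕ) : ℕ :=
  cliqueCount Hᶜ t

lemma compl_induce {V : Type} (R : SimpleGraph V) (s : Set V) :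
    (R.induce s)ᶜ = Rᶜ.induce s := by
  ext a b
  simp [SimpleGraph.compl_adj, Subtype.coe_ne_coe]

lemma lift_clique {V : Type} [DecidableEq V] (R : SimpleGraph V) (A : Set V) (k : ℕ)
    (S : Finset A) (h : (R.induce A).IsNClique k S) :
    R.IsNClique k (S.image Subtype.val) := by
  constructor
  · intro a ha b hb hab
    simp only [Finset.coe_image, Set.mem_image, Finset.mem_coe] at ha hb
    obtain ⟨a', ha', rfl⟩ := ha
    obtain ⟨b', hb', rfl⟩ := hb
    have hne : a' ≠ b' := fun e => hab (by rw [e])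
    exact h.1 (Finset.mem_coe.mpr ha') (Finset.mem_coe.mpr hb') hne
  · rw [Finset.card_image_of_injective _ Subtype.val_injective, h.2]

lemma clique_insert {V : Type} [DecidableEq V] (R : SimpleGraph V) (A : Finset V) (v : V)
    (hv : v ∉ A) (hadj : ∀ u ∈ A, R.Adj v u) (k : ℕ) (S : Finset ((↑A : Set V)))
    (hS : (R.induce ↑A).IsNClique k S) :
    R.IsNClique (k + 1) (insert v (S.image Subtype.val)) := by
  have h' := lift_clique R ↑A k S hS
  have hsub : ∀ x ∈ S.image Subtype.val, x ∈ A := by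
    intro x hx
    simp only [Finset.mem_image] at hx
    obtain ⟨y, _, rfl⟩ := hx
    exact Finset.mem_coe.mp y.2
  constructor
  · intro a ha b hb hab
    simp only [Finset.coe_insert, Set.mem_insert_iff, Finset.mem_coe] at ha hb
    rcases ha with rfl | ha
    · rcases hb with rfl | hb
      · exact absurd rfl hab
      · exact hadj b (hsub b hb)
    · rcases hb with rfl | hb
      · exact (hadj a (hsub a ha)).symm
      · exact h'.1 (Finset.mem_coe.mpr ha) (Finset.mem_coe.mpr hb) hab
  · rw [Finset.card_insert_of_notMem (fun hmem => hv (hsub v hmem)), h'.2]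

lemma ramsey_aux : ∀ N s t : ℕ, s + t ≤ N → ∃ m : ℕ,
    ∀ (V : Type) [Fintype V] [DecidableEq V], m ≤ Fintype.card V →
      ∀ R : SimpleGraph V,
        (∃ A : Finset V, R.IsNClique s A) ∨ (∃ A : Finset V, Rᶜ.IsNClique t A) := by
  intro N
  induction N with
  | zero =>
    intro s t h
    have hs : s = 0 := by omega
    subst hs
    exact ⟨0, fun V _ _ _ R => Or.inl ⟨∅, by simp⟩⟩
  | succ N ih =>
    intro s t hst
    match s, t with
    | 0, t => exact ⟨0, fun V _ _ _ R => Or.inl ⟨∅, by simp⟩⟩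
    | s + 1, 0 => exact ⟨0, fun V _ _ _ R => Or.inr ⟨∅, by simp⟩⟩
    | s + 1, t + 1 =>
      obtain ⟨m₁, h₁⟩ := ih s (t + 1) (by omega)
      obtain ⟨m₂, h₂⟩ := ih (s + 1) t (by omega)
      refine ⟨m₁ + m₂ + 1, ?_⟩
      intro V _ _ hcard R
      classical
      obtain ⟨v⟩ : Nonempty V := Fintype.card_pos_iff.mp (by omega)
      set A : Finset V := univ.filter (fun u => R.Adj v u) with hAdef
      set B : Finset V := univ.filter (fun u => u ≠ v ∧ ¬R.Adj v u) with hBdef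
      have hvA : v ∉ A := by simp [hAdef]
      have hvB : v ∉ B := by simp [hBdef]
      have hdisj : Disjoint A B := by
        rw [Finset.disjoint_left]
        intro u hu hu'
        simp [hAdef] at hu
        simp [hBdef] at hu'
        exact hu'.2 hu
      have hcover : insert v (A ∪ B) = univ := by
        ext u
        simp only [Finset.mem_insert, Finset.mem_union, Finset.mem_univ, iff_true, hAdef,
          hBdef, Finset.mem_filter]
        by_cases h1 : u = v
        · left; exact h1
        · by_cases h2 : R.Adj v u
          · right; left; exact ⟨trivial, h2⟩
          · right; right; exact ⟨trivial, h1, h2⟩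
      have hsum : A.card + B.card + 1 = Fintype.card V := by
        have h1 : (insert v (A ∪ B)).card = (A ∪ B).card + 1 :=
          Finset.card_insert_of_notMem (by simp [hvA, hvB])
        have h2 : (A ∪ B).card = A.card + B.card := Finset.card_union_of_disjoint hdisj
        rw [← Finset.card_univ, ← hcover, h1, h2]
      rcases le_or_gt m₁ A.card with hA | hA
      · have hA' : m₁ ≤ Fintype.card ((↑A : Set V)) := by
          simpa using hA
        rcases h₁ ((↑A : Set V)) hA' (R.induce ↑A) with ⟨S, hS⟩ | ⟨S, hS⟩
        · left
          refine ⟨insert v (S.image Subtype.val), ?_⟩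
          refine clique_insert R A v hvA ?_ s S hS
          intro u hu
          simp [hAdef] at hu
          exact hu
        · right
          rw [compl_induce] at hS
          exact ⟨S.image Subtype.val, lift_clique Rᶜ ↑A (t + 1) S hS⟩
      · have hB : m₂ ≤ B.card := by omega
        have hB' : m₂ ≤ Fintype.card ((↑B : Set V)) := by
          simpa using hB
        rcases h₂ ((↑B : Set V)) hB' (R.induce ↑B) with ⟨S, hS⟩ | ⟨S, hS⟩
        · left
          exact ⟨S.image Subtype.val, lift_clique R ↑B (s + 1) S hS⟩
        · right
          refine ⟨insert v (S.image Subtype.val), ?_⟩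
          rw [compl_induce] at hS
          refine clique_insert Rᶜ B v hvB ?_ t S hS
          intro u hu
          simp [hBdef] at hu
          exact ⟨Ne.symm hu.1, hu.2⟩

lemma exists_ramsey (t : ℕ) : ∃ m, IsRamsey (⊤ : SimpleGraph (Fin m)) 4 t := by
  obtain ⟨m, hm⟩ := ramsey_aux (4 + t) 4 t le_rfl
  refine ⟨m, fun R _ => ?_⟩
  have htop : (⊤ : SimpleGraph (Fin m)) \ R = Rᶜ := by
    ext a b
    simp [SimpleGraph.compl_adj]
  rcases hm (Fin m) (by simp) R with h | ⟨A, hA⟩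
  · exact Or.inl h
  · exact Or.inr ⟨A, htop ▸ hA⟩

lemma cliqueCount_eq {V : Type*} [Fintype V] [DecidableEq V] (G : SimpleGraph V) [DecidableRel G.Adj]
    (s : ℕ) : cliqueCount G s = (G.cliqueFinset s).card := by
  unfold cliqueCount
  congr!

/-- If there is a `K₄`-free graph `H` on `n` vertices such that for every `(4,t)`-Ramsey
graph `G`, every `t`-clique of `G` is mapped to an independent set of `H` with probability
at most `ρ` under a uniformly random map `V(G) → V(H)`, then `r_{K_t}(4,t) ≥ 1/ρ`. -/
theorem stmt11 {VH : Type*} [Fintype VH] [DecidableEq VH]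
    (H : SimpleGraph VH) [DecidableRel H.Adj] (t n : ℕ)
    (hn : Fintype.card VH = n) (hn0 : 0 < n)
    (hH : H.CliqueFree 4) (ρ : ℝ) (hρ0 : 0 < ρ)
    (hρ : ∀ (m : ℕ) (G : SimpleGraph (Fin m)), IsRamsey G 4 t →
      ∀ K : Finset (Fin m), G.IsNClique t K →
        ((univ.filter (fun π : Fin m → VH =>
            ∀ a ∈ K.image π, ∀ b ∈ K.image π, ¬H.Adj a b)).card : ℝ) / (n : ℝ) ^ m ≤ ρ) :
    1 / ρ ≤ (ramseyCliqueNumber t 4 t : ℝ) := by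
  classical
  have hSne : {N | ∃ (m : ℕ) (G : SimpleGraph (Fin m)), IsRamsey G 4 t ∧
      cliqueCount G t = N}.Nonempty := by
    obtain ⟨m, hm⟩ := exists_ramsey t
    exact ⟨_, m, ⊤, hm, rfl⟩
  obtain ⟨m, G, hG, hGcount⟩ := Nat.sInf_mem hSne
  have hrc : ramseyCliqueNumber t 4 t = (G.cliqueFinset t).card := by
    rw [ramseyCliqueNumber, ← hGcount, cliqueCount_eq]
  set C := G.cliqueFinset t with hC
  set cnt : Finset (Fin m) → Finset (Fin m → VH) := fun K =>
    univ.filter (fun π : Fin m → VH => ∀ a ∈ K.image π, ∀ b ∈ K.image π, ¬H.Adj a b)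
    with hcnt
  have key : ∀ π : Fin m → VH, ∃ K ∈ C, π ∈ cnt K := by
    intro π
    set R : SimpleGraph (Fin m) :=
      { Adj := fun u v => G.Adj u v ∧ H.Adj (π u) (π v),
        symm := ⟨fun u v h => ⟨h.1.symm, h.2.symm⟩⟩,
        loopless := ⟨fun u h => G.loopless.irrefl u h.1⟩ } with hR
    rcases hG R (fun u v h => h.1) with ⟨s, hs⟩ | ⟨K, hK⟩
    · exfalso
      have hinj : Set.InjOn π ↑s := by
        intro a ha b hb hab
        by_contra hne
        exact (hs.1 ha hb hne).2.ne hab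
      refine hH (s.image π) ?_
      constructor
      · intro a ha b hb hab
        simp only [Finset.coe_image, Set.mem_image, Finset.mem_coe] at ha hb
        obtain ⟨u, hu, rfl⟩ := ha
        obtain ⟨w, hw, rfl⟩ := hb
        have hne : u ≠ w := fun e => hab (by rw [e])
        exact (hs.1 (Finset.mem_coe.mpr hu) (Finset.mem_coe.mpr hw) hne).2
      · rw [Finset.card_image_of_injOn hinj, hs.2]
    · refine ⟨K, ?_, ?_⟩
      · rw [hC, SimpleGraph.mem_cliqueFinset_iff]
        refine ⟨fun a ha b hb hab => ?_, hK.2⟩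
        exact ((G.sdiff_adj R a b).mp (hK.1 ha hb hab)).1
      · rw [hcnt]
        simp only [Finset.mem_filter, Finset.mem_univ, true_and]
        intro a ha b hb
        simp only [Finset.mem_image] at ha hb
        obtain ⟨u, hu, rfl⟩ := ha
        obtain ⟨w, hw, rfl⟩ := hb
        by_cases hw' : u = w
        · subst hw'; exact H.loopless.irrefl _
        · intro hadj
          have h := hK.1 (Finset.mem_coe.mpr hu) (Finset.mem_coe.mpr hw) hw'
          have h' := (G.sdiff_adj R u w).mp h
          exact h'.2 ⟨h'.1, hadj⟩
  have hsub : (univ : Finset (Fin m → VH)) ⊆ C.biUnion cnt := by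
    intro π _
    rw [Finset.mem_biUnion]
    exact key π
  have hcard1 : (n : ℕ) ^ m ≤ ∑ K ∈ C, (cnt K).card := by
    calc n ^ m = (univ : Finset (Fin m → VH)).card := by
          rw [Finset.card_univ, Fintype.card_fun, hn, Fintype.card_fin]
      _ ≤ (C.biUnion cnt).card := Finset.card_le_card hsub
      _ ≤ ∑ K ∈ C, (cnt K).card := Finset.card_biUnion_le
  have hpow : (0 : ℝ) < (n : ℝ) ^ m := by positivity
  have hbound : ∀ K ∈ C, ((cnt K).card : ℝ) ≤ ρ * (n : ℝ) ^ m := by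
    intro K hK
    have h := hρ m G hG K (SimpleGraph.mem_cliqueFinset_iff.mp hK)
    rw [div_le_iff₀ hpow] at h
    exact h
  have hcard2 : ((n : ℝ)) ^ m ≤ (C.card : ℝ) * (ρ * (n : ℝ) ^ m) := by
    calc ((n : ℝ)) ^ m ≤ ∑ K ∈ C, ((cnt K).card : ℝ) := by
          exact_mod_cast hcard1
      _ ≤ ∑ _K ∈ C, ρ * (n : ℝ) ^ m := Finset.sum_le_sum hbound
      _ = (C.card : ℝ) * (ρ * (n : ℝ) ^ m) := by rw [Finset.sum_const, nsmul_eq_mul]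
  have h1 : 1 ≤ (C.card : ℝ) * ρ := by
    have := le_of_mul_le_mul_right (by linarith [hcard2] : 1 * (n : ℝ) ^ m ≤ ((C.card : ℝ) * ρ) * (n : ℝ) ^ m) hpow
    linarith
  rw [hrc, div_le_iff₀ hρ0]
  exact h1
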